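/- arXiv:1409.7673 — 2 statements merged into one kernel-verified Lean document; each statement's English description precedes it below -/
import Mathlib

section
/- Fix an integer p ≥ 3, set λ = 2cos(π/p), and let k be a positive integer. Let Q₀ = [A₀,B₀,C₀] be a hyperbolic λ-BQF (so Q₀ = [c, d−a, −b] for some M = [[a,b],[c,d]] in G_p with a+d > 2) with positive discriminant. Let S₊ denote the set of G_p-simple forms in the G_p-orbit of Q₀ and S₋ the set of G_p-simple forms in the G_p-orbit of −Q₀, and assume S₊ and S₋ are finite and nonempty. Then the rational function q(z) = Σ_{Q ∈ S₊} Q(z,1)^{−k} − (−1)^k Σ_{Q ∈ S₋} Q(z,1)^{−k} satisfies q + q|T = 0 and q + q|U + q|U² + ⋯ + q|U^{p−1} = 0 (at every z ∈ ℂ where all terms are defined); that is, q is a rational period function of weight 2k on G_p. -/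
open Matrix

noncomputable section

abbrev SL2R := Matrix.SpecialLinearGroup (Fin 2) ℝ

/-- The translation generator `S = [[1, λ],[0,1]]` of the Hecke group. -/
def Smat (l : ℝ) : SL2R := ⟨!![1, l; 0, 1], by norm_num [Matrix.det_fin_two_of]⟩

/-- The inversion generator `T = [[0,-1],[1,0]]`. -/
def Tmat : SL2R := ⟨!![0, -1; 1, 0], by norm_num [Matrix.det_fin_two_of]⟩

/-- `U = S * T = [[λ,-1],[1,0]]`. -/
def Umat (l : ℝ) : SL2R := Smat l * Tmat

/-- The Hecke group `G_p`, the subgroup of `SL(2,ℝ)` generated by `S` and `T`. -/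
def HeckeGroup (l : ℝ) : Subgroup SL2R := Subgroup.closure {Smat l, Tmat}

/-- Möbius action of a matrix on ℂ. -/
def mobius (M : SL2R) (z : ℂ) : ℂ :=
  ((M.1 0 0 : ℝ) * z + (M.1 0 1 : ℝ)) / ((M.1 1 0 : ℝ) * z + (M.1 1 1 : ℝ))

/-- The automorphy denominator `cz + d`. -/
def denom (M : SL2R) (z : ℂ) : ℂ := (M.1 1 0 : ℝ) * z + (M.1 1 1 : ℝ)

/-- Weight `2k` slash operator: `(f|M)(z) = (cz+d)^{-2k} f(Mz)`. -/
def slash (k : ℕ) (M : SL2R) (f : ℂ → ℂ) (z : ℂ) : ℂ :=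
  (denom M z) ^ (-(2 * (k : ℤ))) * f (mobius M z)

/-- The value `Q(z,1) = A z² + B z + C` of the binary quadratic form `Q = [A,B,C]`. -/
def formVal (Q : ℝ × ℝ × ℝ) (z : ℂ) : ℂ :=
  (Q.1 : ℂ) * z ^ 2 + (Q.2.1 : ℂ) * z + (Q.2.2 : ℂ)

/-- Discriminant `B² - 4AC` of the form `[A,B,C]`. -/
def disc (Q : ℝ × ℝ × ℝ) : ℝ := Q.2.1 ^ 2 - 4 * Q.1 * Q.2.2

/-- Action of `M = [[a,b],[c,d]]` on the form `[A,B,C]`: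
`(Q∘M)(x,y) = Q(ax+by, cx+dy)`. -/
def formAct (Q : ℝ × ℝ × ℝ) (M : SL2R) : ℝ × ℝ × ℝ :=
  (Q.1 * (M.1 0 0) ^ 2 + Q.2.1 * (M.1 0 0) * (M.1 1 0) + Q.2.2 * (M.1 1 0) ^ 2,
   2 * Q.1 * (M.1 0 0) * (M.1 0 1) + Q.2.1 * ((M.1 0 0) * (M.1 1 1) + (M.1 0 1) * (M.1 1 0))
     + 2 * Q.2.2 * (M.1 1 0) * (M.1 1 1),
   Q.1 * (M.1 0 1) ^ 2 + Q.2.1 * (M.1 0 1) * (M.1 1 1) + Q.2.2 * (M.1 1 1) ^ 2)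

/-- The `G_p`-orbit of a form. -/
def formOrbit (l : ℝ) (Q : ℝ × ℝ × ℝ) : Set (ℝ × ℝ × ℝ) :=
  {Q' | ∃ M ∈ HeckeGroup l, Q' = formAct Q M}

/-- A form `[A,B,C]` is `G_p`-simple if `A > 0 > C`. -/
def IsSimple (Q : ℝ × ℝ × ℝ) : Prop := 0 < Q.1 ∧ Q.2.2 < 0

/-- A form is hyperbolic if it equals `[c, d-a, -b]` for some `M = [[a,b],[c,d]]` in the
Hecke group with `a + d > 2`. -/
def IsHyperbolicForm (l : ℝ) (Q : ℝ × ℝ × ℝ) : Prop :=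
  ∃ M ∈ HeckeGroup l, 2 < M.1 0 0 + M.1 1 1 ∧
    Q = (M.1 1 0, M.1 1 1 - M.1 0 0, -(M.1 0 1))

/-! ### Auxiliary development -/

section AuxDev

open Real

/-! #### Basic facts about the form action -/

lemma formAct_mul (Q : ℝ × ℝ × ℝ) (M N : SL2R) :
    formAct Q (M * N) = formAct (formAct Q M) N := by
  simp only [formAct, Matrix.SpecialLinearGroup.coe_mul, Matrix.mul_apply, Fin.sum_univ_two,
    Prod.mk.injEq]
  refine ⟨by ring, by ring, by ring⟩

lemma formAct_one (Q : ℝ × ℝ × ℝ) : formAct Q 1 = Q := by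
  obtain ⟨A, B, C⟩ := Q
  simp only [formAct, Matrix.SpecialLinearGroup.coe_one, Matrix.one_apply, Prod.mk.injEq]
  norm_num

lemma formAct_neg (Q : ℝ × ℝ × ℝ) (M : SL2R) : formAct (-Q) M = - formAct Q M := by
  obtain ⟨A, B, C⟩ := Q
  simp only [formAct, Prod.fst_neg, Prod.snd_neg, Prod.neg_mk, Prod.mk.injEq]
  refine ⟨by ring, by ring, by ring⟩

lemma formAct_negone (Q : ℝ × ℝ × ℝ) (M : SL2R) (h : (M : Matrix (Fin 2) (Fin 2) ℝ) = -1) :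
    formAct Q M = Q := by
  obtain ⟨A, B, C⟩ := Q
  simp only [formAct, h, Matrix.neg_apply, Matrix.one_apply, Prod.mk.injEq]
  norm_num

section memb
variable {l : ℝ}

lemma Smem : Smat l ∈ HeckeGroup l := Subgroup.subset_closure (Set.mem_insert _ _)
lemma Tmem : Tmat ∈ HeckeGroup l :=
  Subgroup.subset_closure (Set.mem_insert_of_mem _ rfl)
lemma Umem : Umat l ∈ HeckeGroup l := mul_mem Smem Tmem
lemma Upow_mem (t : ℕ) : (Umat l) ^ t ∈ HeckeGroup l := pow_mem Umem t

lemma orbit_act {P R : ℝ × ℝ × ℝ} (hR : R ∈ formOrbit l P) {M : SL2R}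
    (hM : M ∈ HeckeGroup l) : formAct R M ∈ formOrbit l P := by
  obtain ⟨N, hN, rfl⟩ := hR
  exact ⟨N * M, mul_mem hN hM, by rw [formAct_mul]⟩

lemma orbit_neg {P R : ℝ × ℝ × ℝ} (hR : R ∈ formOrbit l P) : -R ∈ formOrbit l (-P) := by
  obtain ⟨N, hN, rfl⟩ := hR
  exact ⟨N, hN, by rw [formAct_neg]⟩

lemma orbit_neg' {P R : ℝ × ℝ × ℝ} (hR : R ∈ formOrbit l (-P)) : -R ∈ formOrbit l P := by
  have := orbit_neg hR
  rwa [neg_neg] at this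
end memb

/-! #### The sign-change counting lemma -/

lemma count_lemma (p : ℕ) (f : ℕ → ℝ) (h0 : ∀ t ≤ p, f t ≠ 0) (hper : f p = f 0) :
    ((Finset.range p).filter (fun t => 0 < f t ∧ f (t+1) < 0)).card =
    ((Finset.range p).filter (fun t => f t < 0 ∧ 0 < f (t+1))).card := by
  classical
  have key : ∀ t ∈ Finset.range p,
      ((if (0 < f t ∧ f (t+1) < 0) then (1:ℤ) else 0) -
        (if (f t < 0 ∧ 0 < f (t+1)) then (1:ℤ) else 0))
      = ((if 0 < f t then (1:ℤ) else 0) - (if 0 < f (t+1) then (1:ℤ) else 0)) := by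
    intro t ht
    have h1 : f t ≠ 0 := h0 t (le_of_lt (Finset.mem_range.mp ht))
    have h2 : f (t+1) ≠ 0 := h0 (t+1) (by
      have := Finset.mem_range.mp ht; omega)
    rcases h1.lt_or_gt with hA | hA <;> rcases h2.lt_or_gt with hB | hB <;>
      simp [hA, hB, not_lt_of_gt, le_of_lt]
  have cast1 : (((Finset.range p).filter (fun t => 0 < f t ∧ f (t+1) < 0)).card : ℤ) -
      (((Finset.range p).filter (fun t => f t < 0 ∧ 0 < f (t+1))).card : ℤ) = 0 := by
    rw [Finset.card_filter, Finset.card_filter]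
    push_cast
    rw [← Finset.sum_sub_distrib]
    rw [Finset.sum_congr rfl key]
    rw [Finset.sum_range_sub' (fun t => if 0 < f t then (1:ℤ) else 0) p]
    rw [hper]
    ring
  omega

/-! #### Trigonometric power formula for `U` -/

def Um (l : ℝ) : Matrix (Fin 2) (Fin 2) ℝ := !![l, -1; 1, 0]
def Tm : Matrix (Fin 2) (Fin 2) ℝ := !![0, -1; 1, 0]
def Sm (l : ℝ) : Matrix (Fin 2) (Fin 2) ℝ := !![1, l; 0, 1]

section trig
variable {p : ℕ} {l : ℝ}

def sθ (p : ℕ) (x : ℝ) : ℝ := Real.sin (x * (Real.pi / p))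

lemma srec (hl : l = 2 * Real.cos (Real.pi / p)) (x : ℝ) :
    sθ p (x + 1) = l * sθ p x - sθ p (x - 1) := by
  unfold sθ
  have h1 : (x + 1) * (Real.pi / p) = x * (Real.pi / p) + Real.pi / p := by ring
  have h2 : (x - 1) * (Real.pi / p) = x * (Real.pi / p) - Real.pi / p := by ring
  rw [h1, h2, Real.sin_add, Real.sin_sub, hl]
  ring

lemma sθ_one_pos (hp : 3 ≤ p) : 0 < sθ p 1 := by
  unfold sθ
  rw [one_mul]
  have hp' : (3:ℝ) ≤ p := by exact_mod_cast hp
  apply Real.sin_pos_of_pos_of_lt_pi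
  · positivity
  · rw [div_lt_iff₀ (by positivity)]
    nlinarith [Real.pi_pos]

lemma sθ_nonneg (hp : 3 ≤ p) {a : ℕ} (ha : a ≤ p) : 0 ≤ sθ p a := by
  unfold sθ
  have hp0 : (0:ℝ) < p := by positivity
  have ha' : (a:ℝ) ≤ p := by exact_mod_cast ha
  apply Real.sin_nonneg_of_nonneg_of_le_pi
  · positivity
  · calc (a:ℝ) * (Real.pi / p) ≤ p * (Real.pi/p) := by
          apply mul_le_mul_of_nonneg_right ha' (by positivity)
      _ = Real.pi := by field_simp

lemma sθ_pos (hp : 3 ≤ p) {a : ℕ} (ha1 : 1 ≤ a) (ha : a ≤ p - 1) : 0 < sθ p a := by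
  unfold sθ
  have hp0 : (0:ℝ) < p := by positivity
  have ha0 : (0:ℝ) < a := by exact_mod_cast ha1
  have ha' : (a:ℝ) < p := by exact_mod_cast (by omega : a < p)
  apply Real.sin_pos_of_pos_of_lt_pi
  · positivity
  · calc (a:ℝ) * (Real.pi / p) < p * (Real.pi/p) := by
          apply mul_lt_mul_of_pos_right ha' (by positivity)
      _ = Real.pi := by field_simp

def Nmat (p : ℕ) (t : ℝ) : Matrix (Fin 2) (Fin 2) ℝ :=
  !![sθ p (t+1), -(sθ p t); sθ p t, -(sθ p (t-1))]

lemma Um_mul_Nmat (hl : l = 2 * Real.cos (Real.pi / p)) (t : ℝ) :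
    Um l * Nmat p t = Nmat p (t+1) := by
  have key1 : sθ p (t + 1 + 1) = l * sθ p (t + 1) - sθ p t := by
    have := srec hl (t + 1); simpa using this
  have key2 : sθ p (t + 1) = l * sθ p t - sθ p (t - 1) := srec hl t
  ext i j
  fin_cases i <;> fin_cases j <;>
    · simp [Um, Nmat, Matrix.mul_apply, Fin.sum_univ_two]
      try first
        | linarith [key1, key2]
        | ring

lemma Um_pow (hp : 3 ≤ p) (hl : l = 2 * Real.cos (Real.pi / p)) (t : ℕ) :
    (Um l) ^ t = (sθ p 1)⁻¹ • Nmat p t := by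
  have hs1 : sθ p 1 ≠ 0 := ne_of_gt (sθ_one_pos hp)
  induction t with
  | zero =>
    have h0 : sθ p (0:ℝ) = 0 := by unfold sθ; simp
    have hm1 : sθ p ((0:ℝ) - 1) = -(sθ p 1) := by
      unfold sθ
      rw [zero_sub, neg_mul, Real.sin_neg, one_mul]
    rw [pow_zero]
    push_cast
    unfold Nmat
    rw [h0, hm1, zero_add]
    ext i j
    fin_cases i <;> fin_cases j <;>
      simp [Matrix.smul_apply, Matrix.one_apply] <;> field_simp
  | succ n ih =>
    rw [pow_succ', ih, mul_smul_comm, Um_mul_Nmat hl]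
    push_cast
    ring_nf

lemma Um_pow_p (hp : 3 ≤ p) (hl : l = 2 * Real.cos (Real.pi / p)) :
    (Um l) ^ p = -1 := by
  have hs1 : sθ p 1 ≠ 0 := ne_of_gt (sθ_one_pos hp)
  have hp0 : (0:ℝ) < p := by positivity
  have hπ : ((p:ℝ)) * (Real.pi / p) = Real.pi := by field_simp
  have h0 : sθ p p = 0 := by unfold sθ; rw [hπ]; exact Real.sin_pi
  have h1 : sθ p ((p:ℝ) + 1) = -(sθ p 1) := by
    unfold sθ
    rw [add_mul, hπ, one_mul, add_comm, Real.sin_add_pi]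
  have h2 : sθ p ((p:ℝ) - 1) = sθ p 1 := by
    unfold sθ
    rw [sub_mul, hπ, one_mul, Real.sin_pi_sub]
  rw [Um_pow hp hl p]
  unfold Nmat
  rw [h0, h1, h2]
  ext i j
  fin_cases i <;> fin_cases j <;>
    simp [Matrix.smul_apply, Matrix.one_apply] <;> field_simp

end trig

/-! #### Words and normal forms in the Hecke group -/

section words
variable {p : ℕ} {l : ℝ}

def Alt (x y : ℕ) : Prop := (x = 0 ∧ y ≠ 0) ∨ (x ≠ 0 ∧ y = 0)

def WF (p : ℕ) (w : List ℕ) : Prop := (∀ x ∈ w, x ≤ p - 1) ∧ w.Chain' Alt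

def evalW (l : ℝ) : List ℕ → Matrix (Fin 2) (Fin 2) ℝ
  | [] => 1
  | x :: r => (if x = 0 then Tm else (Um l) ^ x) * evalW l r

def NFset (p : ℕ) (l : ℝ) : Set (Matrix (Fin 2) (Fin 2) ℝ) :=
  {A | ∃ w, WF p w ∧ (A = evalW l w ∨ A = -evalW l w)}

lemma TmTm : Tm * Tm = -1 := by
  ext i j; fin_cases i <;> fin_cases j <;>
    simp [Tm, Matrix.mul_apply, Fin.sum_univ_two, Matrix.one_apply]

lemma WF_tail {x : ℕ} {r : List ℕ} (h : WF p (x :: r)) : WF p r :=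
  ⟨fun y hy => h.1 y (List.mem_cons_of_mem _ hy), h.2.tail⟩

lemma WF_cons_T {r : List ℕ} (h : WF p r) (hr : ∀ y ∈ r.head?, y ≠ 0) : WF p (0 :: r) := by
  refine ⟨fun y hy => ?_, ?_⟩
  · rcases List.mem_cons.mp hy with rfl | hy
    · omega
    · exact h.1 y hy
  · exact List.isChain_cons.mpr ⟨fun y hy => Or.inl ⟨rfl, hr y hy⟩, h.2⟩

lemma WF_cons_U {b : ℕ} (hb1 : 1 ≤ b) (hb : b ≤ p - 1) {r : List ℕ} (h : WF p r)
    (hr : ∀ y ∈ r.head?, y = 0) : WF p (b :: r) := by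
  refine ⟨fun y hy => ?_, ?_⟩
  · rcases List.mem_cons.mp hy with rfl | hy
    · exact hb
    · exact h.1 y hy
  · exact List.isChain_cons.mpr ⟨fun y hy => Or.inr ⟨by omega, hr y hy⟩, h.2⟩

lemma WF_head_T {r : List ℕ} (h : WF p (0 :: r)) : ∀ y ∈ r.head?, y ≠ 0 := by
  intro y hy
  have := (List.isChain_cons.mp h.2).1 y hy
  rcases this with ⟨_, h2⟩ | ⟨h1, _⟩
  · exact h2
  · exact absurd rfl h1

lemma WF_head_U {a : ℕ} (ha : a ≠ 0) {r : List ℕ} (h : WF p (a :: r)) :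
    ∀ y ∈ r.head?, y = 0 := by
  intro y hy
  have := (List.isChain_cons.mp h.2).1 y hy
  rcases this with ⟨h1, _⟩ | ⟨_, h2⟩
  · exact absurd h1 ha
  · exact h2

lemma core_T (hUp : (Um l) ^ p = -1) {w : List ℕ} (hwf : WF p w) :
    ∃ w', WF p w' ∧ (Tm * evalW l w = evalW l w' ∨ Tm * evalW l w = - evalW l w') := by
  match w with
  | [] =>
    refine ⟨[0], ⟨by simp, List.isChain_singleton _⟩, Or.inl ?_⟩
    simp [evalW]
  | 0 :: r =>
    refine ⟨r, WF_tail hwf, Or.inr ?_⟩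
    show Tm * (_ * evalW l r) = _
    rw [if_pos rfl, ← mul_assoc, TmTm, neg_one_mul]
  | (a+1) :: r =>
    refine ⟨0 :: (a+1) :: r, WF_cons_T hwf (by simp), Or.inl ?_⟩
    show Tm * _ = _ * evalW l ((a+1) :: r)
    rw [if_pos rfl]

lemma core_U (hp : 3 ≤ p) (hUp : (Um l) ^ p = -1) {b : ℕ} (hb1 : 1 ≤ b) (hb : b ≤ p - 1)
    {w : List ℕ} (hwf : WF p w) :
    ∃ w', WF p w' ∧ ((Um l)^b * evalW l w = evalW l w' ∨ (Um l)^b * evalW l w = - evalW l w') := by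
  match w with
  | [] =>
    refine ⟨[b], ⟨by simpa using hb, List.isChain_singleton _⟩, Or.inl ?_⟩
    simp [evalW, if_neg (by omega : ¬ b = 0)]
  | 0 :: r =>
    refine ⟨b :: 0 :: r, WF_cons_U hb1 hb hwf (by simp), Or.inl ?_⟩
    show _ = _ * evalW l (0 :: r)
    rw [if_neg (by omega : ¬ b = 0)]
  | (a+1) :: r =>
    have ha : a + 1 ≤ p - 1 := hwf.1 (a+1) (List.mem_cons_self)
    have heval : (Um l)^b * evalW l ((a+1) :: r) = (Um l)^(b + (a+1)) * evalW l r := by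
      show (Um l)^b * (_ * evalW l r) = _
      rw [if_neg (by omega : ¬ a + 1 = 0), ← mul_assoc, ← pow_add]
    rcases lt_trichotomy (b + (a+1)) p with hlt | heq | hgt
    · refine ⟨(b + (a+1)) :: r, WF_cons_U (by omega) (by omega) (WF_tail hwf)
        (WF_head_U (by omega) hwf), Or.inl ?_⟩
      rw [heval]
      show _ = _ * evalW l r
      rw [if_neg (by omega : ¬ b + (a+1) = 0)]
    · refine ⟨r, WF_tail hwf, Or.inr ?_⟩
      rw [heval, heq, hUp, neg_one_mul]
    · have h1 : b + (a + 1) - p ≤ p - 1 := by omega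
      have h2 : 1 ≤ b + (a + 1) - p := by omega
      set c := b + (a+1) - p with hcdef
      have hc : b + (a+1) = p + c := by omega
      refine ⟨c :: r, WF_cons_U h2 h1 (WF_tail hwf)
        (WF_head_U (by omega) hwf), Or.inr ?_⟩
      rw [heval, hc, pow_add, hUp, neg_one_mul, neg_mul]
      show -(_ * evalW l r) = _
      rw [show evalW l (c :: r) = (if c = 0 then Tm else (Um l)^c) * evalW l r from rfl,
        if_neg (by omega : ¬ c = 0)]

lemma NF_one : (1 : Matrix (Fin 2) (Fin 2) ℝ) ∈ NFset p l :=
  ⟨[], ⟨by simp, List.isChain_nil⟩, Or.inl rfl⟩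

lemma NF_neg {A : Matrix (Fin 2) (Fin 2) ℝ} (h : A ∈ NFset p l) : -A ∈ NFset p l := by
  obtain ⟨w, hwf, hA | hA⟩ := h
  · exact ⟨w, hwf, Or.inr (by rw [hA])⟩
  · exact ⟨w, hwf, Or.inl (by rw [hA, neg_neg])⟩

lemma NF_T (hUp : (Um l) ^ p = -1) {A : Matrix (Fin 2) (Fin 2) ℝ} (h : A ∈ NFset p l) :
    Tm * A ∈ NFset p l := by
  obtain ⟨w, hwf, hA | hA⟩ := h
  · obtain ⟨w', hwf', h'⟩ := core_T hUp hwf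
    exact ⟨w', hwf', by rwa [hA]⟩
  · obtain ⟨w', hwf', h' | h'⟩ := core_T hUp hwf
    · exact ⟨w', hwf', Or.inr (by rw [hA, mul_neg, h'])⟩
    · exact ⟨w', hwf', Or.inl (by rw [hA, mul_neg, h', neg_neg])⟩

lemma NF_U (hp : 3 ≤ p) (hUp : (Um l) ^ p = -1) {b : ℕ} (hb1 : 1 ≤ b) (hb : b ≤ p - 1)
    {A : Matrix (Fin 2) (Fin 2) ℝ} (h : A ∈ NFset p l) : (Um l)^b * A ∈ NFset p l := by
  obtain ⟨w, hwf, hA | hA⟩ := h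
  · obtain ⟨w', hwf', h'⟩ := core_U hp hUp hb1 hb hwf
    exact ⟨w', hwf', by rwa [hA]⟩
  · obtain ⟨w', hwf', h' | h'⟩ := core_U hp hUp hb1 hb hwf
    · exact ⟨w', hwf', Or.inr (by rw [hA, mul_neg, h'])⟩
    · exact ⟨w', hwf', Or.inl (by rw [hA, mul_neg, h', neg_neg])⟩

lemma Um_mul_Tm : Um l * Tm = -(Sm l) := by
  ext i j; fin_cases i <;> fin_cases j <;>
    simp [Um, Tm, Sm, Matrix.mul_apply, Fin.sum_univ_two]

lemma NF_S (hp : 3 ≤ p) (hUp : (Um l) ^ p = -1) {A : Matrix (Fin 2) (Fin 2) ℝ}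
    (h : A ∈ NFset p l) : Sm l * A ∈ NFset p l := by
  have h1 : Sm l * A = -((Um l)^1 * (Tm * A)) := by
    rw [pow_one, ← mul_assoc, Um_mul_Tm, neg_mul, neg_neg]
  rw [h1]
  exact NF_neg (NF_U hp hUp le_rfl (by omega) (NF_T hUp h))

lemma Um_pow_pred (hp : 3 ≤ p) (hUp : (Um l) ^ p = -1) :
    (Um l) ^ (p - 1) = -(!![0, 1; -1, l]) := by
  have hC : Um l * !![0, 1; -1, l] = 1 := by
    ext i j; fin_cases i <;> fin_cases j <;>
      simp [Um, Matrix.mul_apply, Fin.sum_univ_two, Matrix.one_apply]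
  have h : (Um l)^(p-1) * (Um l * !![0, 1; -1, l]) = (Um l)^(p-1) := by rw [hC, mul_one]
  calc (Um l)^(p-1) = (Um l)^(p-1) * (Um l * !![0, 1; -1, l]) := h.symm
    _ = ((Um l)^(p-1) * Um l) * !![0, 1; -1, l] := by rw [mul_assoc]
    _ = (Um l)^p * !![0, 1; -1, l] := by rw [← pow_succ, Nat.sub_add_cancel (by omega)]
    _ = -(!![0, 1; -1, l]) := by rw [hUp, neg_one_mul]

lemma Tm_mul : Tm * !![0, 1; -1, l] = !![1, -l; 0, 1] := by
  ext i j; fin_cases i <;> fin_cases j <;>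
    simp [Tm, Matrix.mul_apply, Fin.sum_univ_two]

lemma NF_Sinv (hp : 3 ≤ p) (hUp : (Um l) ^ p = -1) {A : Matrix (Fin 2) (Fin 2) ℝ}
    (h : A ∈ NFset p l) : !![1, -l; 0, 1] * A ∈ NFset p l := by
  have h1 : !![1, -l; 0, 1] * A = -(Tm * ((Um l)^(p-1) * A)) := by
    rw [Um_pow_pred hp hUp, neg_mul, mul_neg, neg_neg, ← mul_assoc, Tm_mul]
  rw [h1]
  exact NF_neg (NF_T hUp (NF_U hp hUp (by omega) (by omega) h))

end words

/-! #### Ping-pong semantics -/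

section sem
variable {p : ℕ} {l : ℝ}

def Xr (v : Fin 2 → ℝ) : Prop := v 0 * v 1 < 0
def Yr (v : Fin 2 → ℝ) : Prop := 0 < v 0 * v 1
def Hir (l : ℝ) (v : Fin 2 → ℝ) : Prop := 0 < v 0 * v 1 ∧ 0 < (v 0 - l * v 1) * v 1
def Lor (l : ℝ) (v : Fin 2 → ℝ) : Prop := v 0 * v 1 < l * (v 1)^2
def Outr (l : ℝ) (x : ℕ) (v : Fin 2 → ℝ) : Prop :=
  if x = 0 then Xr v else if x = 1 then Hir l v else (Yr v ∧ Lor l v)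
def Inr (t : ℕ) (v : Fin 2 → ℝ) : Prop := if t = 0 then Yr v else Xr v

lemma Tm_mulVec (v : Fin 2 → ℝ) : Tm.mulVec v 0 = -(v 1) ∧ Tm.mulVec v 1 = v 0 := by
  constructor <;> simp [Tm, Matrix.mulVec, dotProduct, Fin.sum_univ_two]

lemma T_X {v : Fin 2 → ℝ} (h : Yr v) : Xr (Tm.mulVec v) := by
  unfold Xr; rw [(Tm_mulVec v).1, (Tm_mulVec v).2]; unfold Yr at h; nlinarith

lemma Um_mulVec (v : Fin 2 → ℝ) :
    (Um l).mulVec v 0 = l * v 0 - v 1 ∧ (Um l).mulVec v 1 = v 0 := by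
  constructor <;> simp [Um, Matrix.mulVec, dotProduct, Fin.sum_univ_two] <;> ring

lemma U_Hi (hl0 : 0 < l) {v : Fin 2 → ℝ} (h : Xr v) : Hir l ((Um l).mulVec v) := by
  unfold Hir; rw [(Um_mulVec v).1, (Um_mulVec v).2]
  unfold Xr at h
  constructor <;> nlinarith [sq_nonneg (v 0)]

lemma U_Lo {v : Fin 2 → ℝ} (h : Yr v) : Lor l ((Um l).mulVec v) := by
  unfold Lor; rw [(Um_mulVec v).1, (Um_mulVec v).2]
  unfold Yr at h
  nlinarith

lemma Upow_Y (hp : 3 ≤ p) (hl : l = 2 * Real.cos (Real.pi / p)) {a : ℕ}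
    (ha1 : 1 ≤ a) (ha : a ≤ p - 1) {v : Fin 2 → ℝ} (h : Xr v) :
    Yr (((Um l)^a).mulVec v) := by
  have hs1 : 0 < sθ p 1 := sθ_one_pos hp
  rw [Um_pow hp hl a]
  unfold Yr
  rw [Matrix.smul_mulVec]
  have e0 : (Nmat p a).mulVec v 0 = sθ p (a+1) * v 0 - sθ p a * v 1 := by
    simp [Nmat, Matrix.mulVec, dotProduct, Fin.sum_univ_two]; ring
  have e1 : (Nmat p a).mulVec v 1 = sθ p a * v 0 - sθ p ((a:ℝ)-1) * v 1 := by
    simp [Nmat, Matrix.mulVec, dotProduct, Fin.sum_univ_two]; ring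
  simp only [Pi.smul_apply, smul_eq_mul, e0, e1]
  have hsa : 0 < sθ p a := sθ_pos hp ha1 ha
  have hsa1 : 0 ≤ sθ p ((a:ℝ)+1) := by
    have h' : ((a:ℝ)+1) = ((a+1 : ℕ) : ℝ) := by push_cast; ring
    rw [h']; exact sθ_nonneg hp (by omega)
  have hsam : 0 ≤ sθ p ((a:ℝ)-1) := by
    have h' : ((a:ℝ)-1) = ((a-1 : ℕ) : ℝ) := by
      have : (1:ℝ) ≤ (a:ℝ) := by exact_mod_cast ha1
      push_cast [Nat.cast_sub ha1]; ring
    rw [h']; exact sθ_nonneg hp (by omega)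
  unfold Xr at h
  have hinv : 0 < (sθ p 1)⁻¹ := inv_pos.mpr hs1
  rcases mul_neg_iff.mp h with ⟨h0, h1⟩ | ⟨h0, h1⟩
  · have hf0 : 0 < sθ p ((a:ℝ)+1) * v 0 - sθ p a * v 1 := by nlinarith
    have hf1 : 0 < sθ p a * v 0 - sθ p ((a:ℝ)-1) * v 1 := by nlinarith
    exact mul_pos (mul_pos hinv hf0) (mul_pos hinv hf1)
  · have hf0 : sθ p ((a:ℝ)+1) * v 0 - sθ p a * v 1 < 0 := by nlinarith
    have hf1 : sθ p a * v 0 - sθ p ((a:ℝ)-1) * v 1 < 0 := by nlinarith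
    exact mul_pos_of_neg_of_neg (mul_neg_of_pos_of_neg hinv hf0)
      (mul_neg_of_pos_of_neg hinv hf1)

lemma Upow_Out (hp : 3 ≤ p) (hl : l = 2 * Real.cos (Real.pi / p)) (hl0 : 0 < l) {a : ℕ}
    (ha1 : 1 ≤ a) (ha : a ≤ p - 1) {v : Fin 2 → ℝ} (h : Xr v) :
    Outr l a (((Um l)^a).mulVec v) := by
  unfold Outr
  rw [if_neg (by omega : ¬ a = 0)]
  by_cases h1 : a = 1
  · subst h1
    rw [if_pos rfl, pow_one]
    exact U_Hi hl0 h
  · rw [if_neg h1]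
    refine ⟨Upow_Y hp hl ha1 ha h, ?_⟩
    have hsplit : (Um l)^a = Um l * (Um l)^(a-1) := by
      rw [← pow_succ', Nat.sub_add_cancel (by omega)]
    rw [hsplit, ← Matrix.mulVec_mulVec]
    exact U_Lo (Upow_Y hp hl (by omega) (by omega) h)

lemma Out_Y {x : ℕ} {v : Fin 2 → ℝ} (hx : x ≠ 0) (h : Outr l x v) : Yr v := by
  unfold Outr at h
  rw [if_neg hx] at h
  by_cases h1 : x = 1
  · rw [if_pos h1] at h; exact h.1
  · rw [if_neg h1] at h; exact h.1

lemma master (hp : 3 ≤ p) (hl : l = 2 * Real.cos (Real.pi / p)) (hl0 : 0 < l) :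
    ∀ (w : List ℕ) (x : ℕ), WF p (x :: w) → ∀ v : Fin 2 → ℝ,
      Inr (w.getLastD x) v → Outr l x ((evalW l (x :: w)).mulVec v) := by
  intro w
  induction w with
  | nil =>
    intro x hwf v hv
    have h' : evalW l [x] = (if x = 0 then Tm else (Um l) ^ x) * 1 := rfl
    rw [h', mul_one]
    simp only [List.getLastD] at hv
    by_cases hx : x = 0
    · subst hx
      rw [if_pos rfl]
      unfold Outr
      rw [if_pos rfl]
      unfold Inr at hv
      rw [if_pos rfl] at hv
      exact T_X hv
    · rw [if_neg hx]
      unfold Inr at hv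
      rw [if_neg hx] at hv
      exact Upow_Out hp hl hl0 (by omega) (hwf.1 x (List.mem_cons_self)) hv
  | cons y r ih =>
    intro x hwf v hv
    have hlast : (y :: r).getLastD x = r.getLastD y := by
      cases r with
      | nil => simp [List.getLastD]
      | cons z r => simp [List.getLastD, List.getLast?_cons_cons]
    rw [hlast] at hv
    have hwf' : WF p (y :: r) := ⟨fun z hz => hwf.1 z (List.mem_cons_of_mem _ hz), hwf.2.tail⟩
    have halt : Alt x y := (List.isChain_cons_cons.mp hwf.2).1
    have hout : Outr l y ((evalW l (y :: r)).mulVec v) := ih y hwf' v hv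
    have heval : evalW l (x :: y :: r) = (if x = 0 then Tm else (Um l) ^ x) * evalW l (y :: r) :=
      rfl
    rw [heval, ← Matrix.mulVec_mulVec]
    rcases halt with ⟨hx0, hy0⟩ | ⟨hx0, hy0⟩
    · subst hx0
      rw [if_pos rfl]
      unfold Outr
      rw [if_pos rfl]
      exact T_X (Out_Y hy0 hout)
    · rw [if_neg hx0]
      unfold Outr at hout
      rw [if_pos hy0] at hout
      exact Upow_Out hp hl hl0 (by omega) (hwf.1 x (List.mem_cons_self)) hout

lemma Outr_neg {x : ℕ} {v : Fin 2 → ℝ} (h : Outr l x (-v)) : Outr l x v := by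
  unfold Outr Xr Yr Hir Lor at *
  simp only [Pi.neg_apply] at h
  by_cases hx : x = 0
  · rw [if_pos hx] at h ⊢
    nlinarith
  · by_cases hx1 : x = 1
    · rw [if_neg hx, if_pos hx1] at h ⊢
      obtain ⟨h1, h2⟩ := h
      constructor <;> nlinarith
    · rw [if_neg hx, if_neg hx1] at h ⊢
      obtain ⟨h1, h2⟩ := h
      constructor <;> nlinarith

lemma trans_not_NF (hp : 3 ≤ p) (hl : l = 2 * Real.cos (Real.pi / p)) (hl0 : 0 < l)
    {μ : ℝ} (h0 : 0 < μ) (hμ : μ < l) : !![1, μ; 0, 1] ∉ NFset p l := by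
  rintro ⟨w, hwf, hA⟩
  match w with
  | [] =>
    simp only [evalW] at hA
    rcases hA with hA | hA
    · have := congrFun (congrFun hA 0) 1
      simp [Matrix.one_apply] at this
      exact absurd this (ne_of_gt h0)
    · have := congrFun (congrFun hA 0) 0
      simp [Matrix.one_apply] at this
      norm_num at this
  | x :: r =>
    set t := r.getLastD x with hdef
    have key : ∀ v : Fin 2 → ℝ, Inr t v → Outr l x (!![1, μ; 0, 1].mulVec v) := by
      intro v hv
      have h1 := master hp hl hl0 r x hwf v hv
      rcases hA with hA | hA
      · rwa [← hA] at h1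
      · rw [← neg_neg (evalW l (x :: r)), ← hA] at h1
        rw [Matrix.neg_mulVec] at h1
        exact Outr_neg h1
    have Pv : ∀ a b : ℝ, !![1, μ; 0, 1].mulVec ![a, b] = ![a + μ * b, b] := by
      intro a b
      funext i
      fin_cases i <;> simp [Matrix.mulVec, dotProduct, Fin.sum_univ_two]
    by_cases ht : t = 0
    · by_cases hx : x = 0
      · have h2 := key ![1, 1] (by unfold Inr; rw [if_pos ht]; unfold Yr; norm_num)
        rw [Pv] at h2
        unfold Outr at h2; rw [if_pos hx] at h2
        unfold Xr at h2
        simp at h2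
        nlinarith
      · by_cases hx1 : x = 1
        · have h2 := key ![(l - μ)/2, 1]
            (by unfold Inr; rw [if_pos ht]; unfold Yr; norm_num; nlinarith)
          rw [Pv] at h2
          unfold Outr at h2; rw [if_neg hx, if_pos hx1] at h2
          unfold Hir at h2
          obtain ⟨-, h3⟩ := h2
          simp at h3
          nlinarith
        · have h2 := key ![l, 1]
            (by unfold Inr; rw [if_pos ht]; unfold Yr; norm_num; nlinarith)
          rw [Pv] at h2
          unfold Outr at h2; rw [if_neg hx, if_neg hx1] at h2
          obtain ⟨-, h3⟩ := h2
          unfold Lor at h3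
          simp at h3
          nlinarith
    · by_cases hx : x = 0
      · have h2 := key ![-(μ/2), 1]
          (by unfold Inr; rw [if_neg ht]; unfold Xr; norm_num; nlinarith)
        rw [Pv] at h2
        unfold Outr at h2; rw [if_pos hx] at h2
        unfold Xr at h2
        simp at h2
        nlinarith
      · by_cases hx1 : x = 1
        · have h2 := key ![-1, 1]
            (by unfold Inr; rw [if_neg ht]; unfold Xr; norm_num)
          rw [Pv] at h2
          unfold Outr at h2; rw [if_neg hx, if_pos hx1] at h2
          obtain ⟨h3, h4⟩ := h2
          simp at h3 h4
          nlinarith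
        · have h2 := key ![-1 - l, 1]
            (by unfold Inr; rw [if_neg ht]; unfold Xr; norm_num; nlinarith)
          rw [Pv] at h2
          unfold Outr at h2; rw [if_neg hx, if_neg hx1] at h2
          obtain ⟨h3, -⟩ := h2
          unfold Yr at h3
          simp at h3
          nlinarith

end sem

/-! #### The rigidity lemma: upper triangular elements of the Hecke group -/

section rigidity
variable {p : ℕ} {l : ℝ}

lemma Smat_inv_coe : ((Smat l)⁻¹ : SL2R).1 = !![1, -l; 0, 1] := by
  rw [Matrix.SpecialLinearGroup.coe_inv, Matrix.adjugate_fin_two]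
  norm_num [Smat]

lemma Tmat_inv_coe : ((Tmat)⁻¹ : SL2R).1 = -Tm := by
  rw [Matrix.SpecialLinearGroup.coe_inv, Matrix.adjugate_fin_two]
  ext i j
  fin_cases i <;> fin_cases j <;> simp [Tmat, Tm]

lemma NF_main (hp : 3 ≤ p) (hl : l = 2 * Real.cos (Real.pi / p)) {g : SL2R}
    (hg : g ∈ HeckeGroup l) : (g : Matrix (Fin 2) (Fin 2) ℝ) ∈ NFset p l := by
  have hUp : (Um l) ^ p = -1 := Um_pow_p hp hl
  have hg' : g ∈ Submonoid.closure ({Smat l, Tmat} ∪ ({Smat l, Tmat} : Set SL2R)⁻¹) := by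
    have h' := Subgroup.closure_toSubmonoid ({Smat l, Tmat} : Set SL2R)
    have h2 : g ∈ (Subgroup.closure ({Smat l, Tmat} : Set SL2R)).toSubmonoid := hg
    rwa [h'] at h2
  obtain ⟨L, hL, hprod⟩ := Submonoid.exists_list_of_mem_closure hg'
  subst hprod
  clear hg hg'
  induction L with
  | nil => simpa using NF_one
  | cons y L ihL =>
    have hy := hL y (List.mem_cons_self)
    have hrest : ((L.prod : SL2R) : Matrix (Fin 2) (Fin 2) ℝ) ∈ NFset p l :=
      ihL (fun z hz => hL z (List.mem_cons_of_mem _ hz))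
    have hcoe : (((y :: L).prod : SL2R) : Matrix (Fin 2) (Fin 2) ℝ) =
        (y : Matrix (Fin 2) (Fin 2) ℝ) * ((L.prod : SL2R) : Matrix (Fin 2) (Fin 2) ℝ) := by
      rw [List.prod_cons]
      rfl
    rw [hcoe]
    rcases hy with hy | hy
    · rcases hy with hy | hy
      · rw [hy]
        show Sm l * _ ∈ _
        exact NF_S hp hUp hrest
      · rw [Set.mem_singleton_iff] at hy
        rw [hy]
        show Tm * _ ∈ _
        exact NF_T hUp hrest
    · rw [Set.mem_inv] at hy
      rcases hy with hy | hy
      · have h' : y = (Smat l)⁻¹ := by rw [← hy, inv_inv]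
        rw [h', Smat_inv_coe]
        exact NF_Sinv hp hUp hrest
      · rw [Set.mem_singleton_iff] at hy
        have h' : y = Tmat⁻¹ := by rw [← hy, inv_inv]
        rw [h', Tmat_inv_coe, neg_mul]
        exact NF_neg (NF_T hUp hrest)

lemma l_pos (hp : 3 ≤ p) (hl : l = 2 * Real.cos (Real.pi / p)) : 0 < l := by
  rw [hl]
  have hp' : (3:ℝ) ≤ p := by exact_mod_cast hp
  have h1 : 0 < Real.pi / p := by positivity
  have h2 : Real.pi / p < Real.pi / 2 := by
    apply div_lt_div_of_pos_left Real.pi_pos (by norm_num)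
    linarith
  have := Real.cos_pos_of_mem_Ioo (Set.mem_Ioo.mpr ⟨by linarith [Real.pi_pos], h2⟩)
  linarith

/-- Key rigidity: upper triangular elements of the Hecke group have diagonal entries `±1`. -/
lemma upper_tri (hp : 3 ≤ p) (hl : l = 2 * Real.cos (Real.pi / p)) {g : SL2R}
    (hg : g ∈ HeckeGroup l) (hc : (g : Matrix (Fin 2) (Fin 2) ℝ) 1 0 = 0) :
    (g : Matrix (Fin 2) (Fin 2) ℝ) 0 0 = 1 ∨ (g : Matrix (Fin 2) (Fin 2) ℝ) 0 0 = -1 := by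
  have hl0 : 0 < l := l_pos hp hl
  by_contra hcon
  push_neg at hcon
  obtain ⟨h1, h2⟩ := hcon
  obtain ⟨α, hα⟩ : ∃ α, (g : Matrix (Fin 2) (Fin 2) ℝ) 0 0 = α := ⟨_, rfl⟩
  obtain ⟨β, hβ⟩ : ∃ β, (g : Matrix (Fin 2) (Fin 2) ℝ) 0 1 = β := ⟨_, rfl⟩
  obtain ⟨δ, hδ⟩ : ∃ δ, (g : Matrix (Fin 2) (Fin 2) ℝ) 1 1 = δ := ⟨_, rfl⟩
  rw [hα] at h1 h2
  have hdet : α * δ = 1 := by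
    have h := g.2
    rw [Matrix.det_fin_two, hα, hβ, hδ, hc] at h
    linarith [h]
  have hα0 : α ≠ 0 := by
    intro h; rw [h, zero_mul] at hdet; norm_num at hdet
  have hδ0 : δ ≠ 0 := by
    intro h; rw [h, mul_zero] at hdet; norm_num at hdet
  have hmat : (g : Matrix (Fin 2) (Fin 2) ℝ) = !![α, β; 0, δ] := by
    ext i j
    fin_cases i <;> fin_cases j <;> simp [hα, hβ, hδ, hc]
  have hadj : ((g⁻¹ : SL2R) : Matrix (Fin 2) (Fin 2) ℝ) = !![δ, -β; 0, α] := by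
    rw [Matrix.SpecialLinearGroup.coe_inv, Matrix.adjugate_fin_two, hmat]
    norm_num
  have hsq : α^2 ≠ 1 := by
    intro h
    have h' : (α - 1) * (α + 1) = 0 := by ring_nf; linarith [h]
    rcases mul_eq_zero.mp h' with h'' | h''
    · exact h1 (by linarith)
    · exact h2 (by linarith)
  rcases lt_or_gt_of_ne hsq with hlt | hgt
  · have hmem : g * Smat l * g⁻¹ ∈ HeckeGroup l :=
      mul_mem (mul_mem hg (Subgroup.subset_closure (Set.mem_insert _ _))) (inv_mem hg)
    have hcoe : ((g * Smat l * g⁻¹ : SL2R) : Matrix (Fin 2) (Fin 2) ℝ) =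
        !![1, l * α^2; 0, 1] := by
      have h' : ((g * Smat l * g⁻¹ : SL2R) : Matrix (Fin 2) (Fin 2) ℝ) =
          (g : Matrix (Fin 2) (Fin 2) ℝ) * (Smat l).1 * ((g⁻¹ : SL2R) : Matrix _ _ ℝ) := by
        simp
      rw [h', hmat, hadj]
      show _ * !![1, l; 0, 1] * _ = _
      ext i j
      fin_cases i <;> fin_cases j <;>
        (simp [Matrix.mul_apply, Fin.sum_univ_two]; try nlinarith [hdet])
    have hNF := NF_main hp hl hmem
    rw [hcoe] at hNF
    have hα0' : α ≠ 0 := hα0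
    have hμ0 : 0 < l * α^2 := by positivity
    have hμl : l * α^2 < l := by nlinarith [sq_nonneg α]
    exact trans_not_NF hp hl hl0 hμ0 hμl hNF
  · have hmem : g⁻¹ * Smat l * g ∈ HeckeGroup l :=
      mul_mem (mul_mem (inv_mem hg) (Subgroup.subset_closure (Set.mem_insert _ _))) hg
    have hcoe : ((g⁻¹ * Smat l * g : SL2R) : Matrix (Fin 2) (Fin 2) ℝ) =
        !![1, l * δ^2; 0, 1] := by
      have h' : ((g⁻¹ * Smat l * g : SL2R) : Matrix (Fin 2) (Fin 2) ℝ) =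
          ((g⁻¹ : SL2R) : Matrix _ _ ℝ) * (Smat l).1 * (g : Matrix (Fin 2) (Fin 2) ℝ) := by
        simp
      rw [h', hmat, hadj]
      show _ * !![1, l; 0, 1] * _ = _
      ext i j
      fin_cases i <;> fin_cases j <;>
        (simp [Matrix.mul_apply, Fin.sum_univ_two]; try nlinarith [hdet])
    have hNF := NF_main hp hl hmem
    rw [hcoe] at hNF
    have hδsq : δ^2 < 1 := by nlinarith [sq_nonneg (α*δ - 1), sq_nonneg (α - δ)]
    have hδ0' : δ ≠ 0 := hδ0
    have hμ0 : 0 < l * δ^2 := by positivity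
    have hμl : l * δ^2 < l := by nlinarith
    exact trans_not_NF hp hl hl0 hμ0 hμl hNF

/-- No form in the orbit of a hyperbolic form represents zero at a cusp vector:
the leading coefficient of any form in the orbit is nonzero. -/
lemma orbit_fst_ne (hp : 3 ≤ p) (hl : l = 2 * Real.cos (Real.pi / p)) {Q₀ : ℝ × ℝ × ℝ}
    (hQ₀ : IsHyperbolicForm l Q₀) {R : ℝ × ℝ × ℝ} (hR : R ∈ formOrbit l Q₀) : R.1 ≠ 0 := by
  obtain ⟨M, hM, htr, hQ⟩ := hQ₀
  obtain ⟨N, hN, rfl⟩ := hR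
  intro h0
  have hc : ((N⁻¹ * M * N : SL2R) : Matrix (Fin 2) (Fin 2) ℝ) 1 0 = 0 := by
    have hcoe : ((N⁻¹ * M * N : SL2R) : Matrix (Fin 2) (Fin 2) ℝ) =
        ((N⁻¹ : SL2R) : Matrix _ _ ℝ) * (M : Matrix _ _ ℝ) * (N : Matrix _ _ ℝ) := by simp
    have hadj : ((N⁻¹ : SL2R) : Matrix (Fin 2) (Fin 2) ℝ) =
        !![(N : Matrix (Fin 2) (Fin 2) ℝ) 1 1, -(N : Matrix (Fin 2) (Fin 2) ℝ) 0 1;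
           -(N : Matrix (Fin 2) (Fin 2) ℝ) 1 0, (N : Matrix (Fin 2) (Fin 2) ℝ) 0 0] := by
      rw [Matrix.SpecialLinearGroup.coe_inv, Matrix.adjugate_fin_two]
    rw [hQ] at h0
    simp only [formAct] at h0
    rw [hcoe, hadj]
    simp [Matrix.mul_apply, Matrix.vecMul, dotProduct, Fin.sum_univ_two]
    linear_combination h0
  have htr' : ((N⁻¹ * M * N : SL2R) : Matrix (Fin 2) (Fin 2) ℝ) 0 0 +
      ((N⁻¹ * M * N : SL2R) : Matrix (Fin 2) (Fin 2) ℝ) 1 1 =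
      (M : Matrix (Fin 2) (Fin 2) ℝ) 0 0 + (M : Matrix (Fin 2) (Fin 2) ℝ) 1 1 := by
    rw [← Matrix.trace_fin_two, ← Matrix.trace_fin_two]
    have hcoe : ((N⁻¹ * M * N : SL2R) : Matrix (Fin 2) (Fin 2) ℝ) =
        (((N⁻¹ * M : SL2R)) : Matrix _ _ ℝ) * (N : Matrix _ _ ℝ) := by simp
    rw [hcoe, Matrix.trace_mul_comm]
    have e : N * (N⁻¹ * M) = M := by rw [← mul_assoc, mul_inv_cancel, one_mul]
    rw [← Matrix.SpecialLinearGroup.coe_mul, e]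
  have hdet : ((N⁻¹ * M * N : SL2R) : Matrix (Fin 2) (Fin 2) ℝ) 0 0 *
      ((N⁻¹ * M * N : SL2R) : Matrix (Fin 2) (Fin 2) ℝ) 1 1 = 1 := by
    have h := (N⁻¹ * M * N : SL2R).2
    rw [Matrix.det_fin_two, hc] at h
    linarith [h]
  have hmem : N⁻¹ * M * N ∈ HeckeGroup l := mul_mem (mul_mem (inv_mem hN) hM) hN
  rcases upper_tri hp hl hmem hc with h | h <;> rw [h] at htr' hdet <;> nlinarith [htr', hdet]

end rigidity

/-! #### Slash covariance for powers of forms -/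

lemma formVal_act_eq (Q : ℝ × ℝ × ℝ) (M : SL2R) (z : ℂ) (hd : denom M z ≠ 0) :
    formVal (formAct Q M) z = (denom M z)^2 * formVal Q (mobius M z) := by
  obtain ⟨A, B, C⟩ := Q
  unfold formVal formAct mobius denom at *
  push_cast
  field_simp
  ring

lemma slash_formVal (k : ℕ) (M : SL2R) (Q : ℝ × ℝ × ℝ) (z : ℂ) (hd : denom M z ≠ 0) :
    (denom M z) ^ (-(2 * (k : ℤ))) * (formVal Q (mobius M z)) ^ (-(k : ℤ)) =
      (formVal (formAct Q M) z) ^ (-(k : ℤ)) := by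
  rw [formVal_act_eq Q M z hd]
  rw [mul_zpow]
  have h1 : ((denom M z)^2 : ℂ) ^ (-(k:ℤ)) = (denom M z) ^ ((2:ℤ) * (-(k:ℤ))) := by
    rw [← zpow_natCast (denom M z) 2, ← _root_.zpow_mul]
    norm_num
  rw [h1, show ((2:ℤ) * (-(k:ℤ))) = -(2 * (k:ℤ)) by ring]

lemma formVal_neg (Q : ℝ × ℝ × ℝ) (z : ℂ) : formVal (-Q) z = - formVal Q z := by
  obtain ⟨A, B, C⟩ := Q
  simp only [formVal, Prod.fst_neg, Prod.snd_neg]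
  push_cast
  ring

lemma zpow_neg_form (k : ℕ) (w : ℂ) : (-w) ^ (-(k:ℤ)) = (-1)^k * w ^ (-(k:ℤ)) := by
  rw [show (-w) = (-1) * w by ring, mul_zpow]
  congr 1
  rw [_root_.zpow_neg, zpow_natCast]
  apply inv_eq_of_mul_eq_one_right
  rw [← pow_add, show k + k = 2*k by ring, pow_mul]
  norm_num

/-! #### Fiber counting -/

lemma Umat_coe {l : ℝ} : ((Umat l : SL2R) : Matrix (Fin 2) (Fin 2) ℝ) = Um l := by
  show ((Smat l * Tmat : SL2R) : Matrix (Fin 2) (Fin 2) ℝ) = Um l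
  rw [Matrix.SpecialLinearGroup.coe_mul]
  show (!![1, l; 0, 1] : Matrix (Fin 2) (Fin 2) ℝ) * !![0, -1; 1, 0] = _
  ext i j
  fin_cases i <;> fin_cases j <;> simp [Um, Matrix.mul_apply, Fin.sum_univ_two]

lemma Umat_pow_coe {l : ℝ} (t : ℕ) :
    (((Umat l) ^ t : SL2R) : Matrix (Fin 2) (Fin 2) ℝ) = (Um l) ^ t := by
  rw [Matrix.SpecialLinearGroup.coe_pow, Umat_coe]

lemma formAct_CA {l : ℝ} (R : ℝ × ℝ × ℝ) (M : SL2R) :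
    (formAct R (M * Umat l)).2.2 = (formAct R M).1 := by
  obtain ⟨A, B, C⟩ := R
  simp only [formAct, Matrix.SpecialLinearGroup.coe_mul, Matrix.mul_apply, Fin.sum_univ_two,
    Umat_coe, Um]
  simp [Matrix.cons_val_zero, Matrix.cons_val_one]
  try ring

lemma fiber_count {p : ℕ} {l : ℝ} (hp : 3 ≤ p) (hl : l = 2 * Real.cos (Real.pi / p))
    {Q₀ : ℝ × ℝ × ℝ} (hQ₀ : IsHyperbolicForm l Q₀)
    {Splus Sminus : Finset (ℝ × ℝ × ℝ)}
    (hSplus : ∀ Q, Q ∈ Splus ↔ Q ∈ formOrbit l Q₀ ∧ IsSimple Q)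
    (hSminus : ∀ Q, Q ∈ Sminus ↔ Q ∈ formOrbit l (-Q₀) ∧ IsSimple Q)
    {R : ℝ × ℝ × ℝ} (hR : R ∈ formOrbit l Q₀) :
    ((Splus ×ˢ Finset.range p).filter
        (fun x => formAct x.1 ((Umat l) ^ x.2) = R)).card =
    ((Sminus ×ˢ Finset.range p).filter
        (fun x => formAct (-x.1) ((Umat l) ^ x.2) = R)).card := by
  classical
  have hUp : (((Umat l) ^ p : SL2R) : Matrix (Fin 2) (Fin 2) ℝ) = -1 := by
    rw [Umat_pow_coe, Um_pow_p hp hl]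
  set a : ℕ → ℝ := fun t => (formAct R ((Umat l) ^ (p - t))).1 with ha
  have hQt : ∀ t ≤ p, ∀ Q : ℝ × ℝ × ℝ,
      formAct Q ((Umat l) ^ t) = R ↔ Q = formAct R ((Umat l) ^ (p - t)) := by
    intro t ht Q
    constructor
    · rintro rfl
      rw [← formAct_mul, ← pow_add, show t + (p - t) = p by omega, formAct_negone _ _ hUp]
    · rintro rfl
      rw [← formAct_mul, ← pow_add, show p - t + t = p by omega, formAct_negone _ _ hUp]
  -- identify the two fibers with subsets of `range p`
  have hcard1 : ((Splus ×ˢ Finset.range p).filter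
      (fun x => formAct x.1 ((Umat l) ^ x.2) = R)).card =
      ((Finset.range p).filter (fun t => formAct R ((Umat l) ^ (p - t)) ∈ Splus)).card := by
    apply Finset.card_bij (fun x _ => x.2)
    · intro x hx
      obtain ⟨hmem, heq⟩ := Finset.mem_filter.mp hx
      obtain ⟨hQ, ht⟩ := Finset.mem_product.mp hmem
      refine Finset.mem_filter.mpr ⟨ht, ?_⟩
      have := (hQt x.2 (le_of_lt (Finset.mem_range.mp ht)) x.1).mp heq
      rwa [← this]
    · intro x hx y hy hxy
      obtain ⟨hmemx, heqx⟩ := Finset.mem_filter.mp hx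
      obtain ⟨hmemy, heqy⟩ := Finset.mem_filter.mp hy
      obtain ⟨hQx, htx⟩ := Finset.mem_product.mp hmemx
      obtain ⟨hQy, hty⟩ := Finset.mem_product.mp hmemy
      have e1 := (hQt x.2 (le_of_lt (Finset.mem_range.mp htx)) x.1).mp heqx
      have e2 := (hQt y.2 (le_of_lt (Finset.mem_range.mp hty)) y.1).mp heqy
      exact Prod.ext (by rw [e1, e2, hxy]) hxy
    · intro t ht
      obtain ⟨htp, hmem⟩ := Finset.mem_filter.mp ht
      refine ⟨(formAct R ((Umat l) ^ (p - t)), t), ?_, rfl⟩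
      refine Finset.mem_filter.mpr ⟨Finset.mem_product.mpr ⟨hmem, htp⟩, ?_⟩
      exact (hQt t (le_of_lt (Finset.mem_range.mp htp)) _).mpr rfl
  have hcard2 : ((Sminus ×ˢ Finset.range p).filter
      (fun x => formAct (-x.1) ((Umat l) ^ x.2) = R)).card =
      ((Finset.range p).filter
        (fun t => -(formAct R ((Umat l) ^ (p - t))) ∈ Sminus)).card := by
    apply Finset.card_bij (fun x _ => x.2)
    · intro x hx
      obtain ⟨hmem, heq⟩ := Finset.mem_filter.mp hx
      obtain ⟨hQ, ht⟩ := Finset.mem_product.mp hmem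
      refine Finset.mem_filter.mpr ⟨ht, ?_⟩
      have := (hQt x.2 (le_of_lt (Finset.mem_range.mp ht)) (-x.1)).mp heq
      rw [← this, neg_neg]
      exact hQ
    · intro x hx y hy hxy
      obtain ⟨hmemx, heqx⟩ := Finset.mem_filter.mp hx
      obtain ⟨hmemy, heqy⟩ := Finset.mem_filter.mp hy
      obtain ⟨hQx, htx⟩ := Finset.mem_product.mp hmemx
      obtain ⟨hQy, hty⟩ := Finset.mem_product.mp hmemy
      have e1 := (hQt x.2 (le_of_lt (Finset.mem_range.mp htx)) (-x.1)).mp heqx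
      have e2 := (hQt y.2 (le_of_lt (Finset.mem_range.mp hty)) (-y.1)).mp heqy
      have : -x.1 = -y.1 := by rw [e1, e2, hxy]
      exact Prod.ext (by simpa using this) hxy
    · intro t ht
      obtain ⟨htp, hmem⟩ := Finset.mem_filter.mp ht
      refine ⟨(-(formAct R ((Umat l) ^ (p - t))), t), ?_, rfl⟩
      refine Finset.mem_filter.mpr ⟨Finset.mem_product.mpr ⟨hmem, htp⟩, ?_⟩
      rw [neg_neg]
      exact (hQt t (le_of_lt (Finset.mem_range.mp htp)) _).mpr rfl
  rw [hcard1, hcard2]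
  -- rewrite memberships as sign conditions on `a`
  have horb : ∀ t : ℕ, formAct R ((Umat l) ^ (p - t)) ∈ formOrbit l Q₀ :=
    fun t => orbit_act hR (Upow_mem _)
  have hCA : ∀ t, t < p → (formAct R ((Umat l) ^ (p - t))).2.2 = a (t + 1) := by
    intro t ht
    have hsplit : (Umat l) ^ (p - t) = (Umat l) ^ (p - (t + 1)) * Umat l := by
      rw [← pow_succ, show p - (t+1) + 1 = p - t by omega]
    rw [hsplit, formAct_CA]
  have hmem1 : ∀ t ∈ Finset.range p,
      (formAct R ((Umat l) ^ (p - t)) ∈ Splus ↔ (0 < a t ∧ a (t + 1) < 0)) := by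
    intro t ht
    rw [hSplus]
    constructor
    · rintro ⟨-, h1, h2⟩
      exact ⟨h1, by rwa [hCA t (Finset.mem_range.mp ht)] at h2⟩
    · rintro ⟨h1, h2⟩
      exact ⟨horb t, h1, by rwa [hCA t (Finset.mem_range.mp ht)]⟩
  have hmem2 : ∀ t ∈ Finset.range p,
      (-(formAct R ((Umat l) ^ (p - t))) ∈ Sminus ↔ (a t < 0 ∧ 0 < a (t + 1))) := by
    intro t ht
    rw [hSminus]
    constructor
    · rintro ⟨-, h1, h2⟩
      rw [Prod.fst_neg] at h1
      rw [Prod.snd_neg, Prod.snd_neg] at h2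
      refine ⟨by simpa using h1, ?_⟩
      rw [hCA t (Finset.mem_range.mp ht)] at h2
      simpa using h2
    · rintro ⟨h1, h2⟩
      refine ⟨orbit_neg (horb t), ?_, ?_⟩
      · rw [Prod.fst_neg]; simpa using h1
      · rw [Prod.snd_neg, Prod.snd_neg]
        rw [hCA t (Finset.mem_range.mp ht)]
        simpa using h2
  rw [Finset.filter_congr hmem1, Finset.filter_congr hmem2]
  apply count_lemma
  · intro t ht
    exact orbit_fst_ne hp hl hQ₀ (horb t)
  · show (formAct R ((Umat l) ^ (p - p))).1 = (formAct R ((Umat l) ^ (p - 0))).1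
    rw [Nat.sub_self, pow_zero, formAct_one, Nat.sub_zero, formAct_negone _ _ hUp]

end AuxDev

/-- For a hyperbolic λ-BQF `Q₀` of positive discriminant, the function
`q(z) = Σ_{Q ∈ S₊} Q(z,1)^{-k} - (-1)^k Σ_{Q ∈ S₋} Q(z,1)^{-k}`, where `S₊`, `S₋` are the
(finite, nonempty) sets of simple forms in the orbits of `Q₀` and `-Q₀`, satisfies the two
rational period function relations of weight `2k` on `G_p`. -/
theorem rpf_of_orbit_pair (p : ℕ) (hp : 3 ≤ p) (k : ℕ) (hk : 1 ≤ k)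
    (l : ℝ) (hl : l = 2 * Real.cos (Real.pi / p))
    (Q₀ : ℝ × ℝ × ℝ) (hQ₀ : IsHyperbolicForm l Q₀) (hD : 0 < disc Q₀)
    (Splus Sminus : Finset (ℝ × ℝ × ℝ))
    (hSplus : ∀ Q, Q ∈ Splus ↔ Q ∈ formOrbit l Q₀ ∧ IsSimple Q)
    (hSminus : ∀ Q, Q ∈ Sminus ↔ Q ∈ formOrbit l (-Q₀) ∧ IsSimple Q)
    (hneP : Splus.Nonempty) (hneM : Sminus.Nonempty)
    (q : ℂ → ℂ)
    (hq : ∀ z, q z = (∑ Q ∈ Splus, (formVal Q z) ^ (-(k : ℤ)))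
        - (-1) ^ k * ∑ Q ∈ Sminus, (formVal Q z) ^ (-(k : ℤ))) :
    (∀ z : ℂ, denom Tmat z ≠ 0 →
      (∀ Q ∈ Splus ∪ Sminus, formVal Q z ≠ 0 ∧ formVal Q (mobius Tmat z) ≠ 0) →
      q z + slash k Tmat q z = 0) ∧
    (∀ z : ℂ,
      (∀ t < p, denom ((Umat l) ^ t) z ≠ 0 ∧
        ∀ Q ∈ Splus ∪ Sminus, formVal Q (mobius ((Umat l) ^ t) z) ≠ 0) →
      ∑ t ∈ Finset.range p, slash k ((Umat l) ^ t) q z = 0) := by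
  classical
  have hk1 : ((-1:ℂ)) ^ k * (-1:ℂ) ^ k = 1 := by
    rw [← pow_add, show k + k = 2 * k by ring, pow_mul]
    norm_num
  constructor
  · -- the `T`-relation
    intro z hden hvals
    set gz : (ℝ × ℝ × ℝ) → ℂ := fun R => (formVal R z) ^ (-(k : ℤ)) with hgz
    have hactT : ∀ Q : ℝ × ℝ × ℝ, formAct Q Tmat = (Q.2.2, -Q.2.1, Q.1) := by
      rintro ⟨A, B, C⟩
      show formAct (A, B, C) Tmat = _
      simp only [formAct, Prod.mk.injEq]
      show A * ((0:ℝ)) ^ 2 + B * 0 * 1 + C * 1 ^ 2 = C ∧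
        2 * A * 0 * (-1) + B * (0 * 0 + -1 * 1) + 2 * C * 1 * 0 = -B ∧
        A * (-1:ℝ) ^ 2 + B * (-1) * 0 + C * 0 ^ 2 = A
      norm_num
    set φ : (ℝ × ℝ × ℝ) → (ℝ × ℝ × ℝ) := fun Q => -formAct Q Tmat with hφ
    have hφφ : ∀ Q, φ (φ Q) = Q := by
      rintro ⟨A, B, C⟩
      simp [hφ, hactT, Prod.neg_mk]
    have hφP : ∀ Q ∈ Splus, φ Q ∈ Sminus := by
      intro Q hQ
      obtain ⟨horb, hsim⟩ := (hSplus Q).mp hQ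
      refine (hSminus (φ Q)).mpr ⟨orbit_neg (orbit_act horb Tmem), ?_⟩
      rw [hφ]
      constructor
      · show 0 < (-formAct Q Tmat).1
        rw [Prod.fst_neg, hactT]
        simpa using hsim.2
      · show (-formAct Q Tmat).2.2 < 0
        rw [Prod.snd_neg, Prod.snd_neg, hactT]
        simpa using hsim.1
    have hφM : ∀ Q ∈ Sminus, φ Q ∈ Splus := by
      intro Q hQ
      obtain ⟨horb, hsim⟩ := (hSminus Q).mp hQ
      refine (hSplus (φ Q)).mpr ⟨orbit_neg' (orbit_act horb Tmem), ?_⟩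
      rw [hφ]
      constructor
      · show 0 < (-formAct Q Tmat).1
        rw [Prod.fst_neg, hactT]
        simpa using hsim.2
      · show (-formAct Q Tmat).2.2 < 0
        rw [Prod.snd_neg, Prod.snd_neg, hactT]
        simpa using hsim.1
    have hslash : slash k Tmat q z =
        (∑ Q ∈ Splus, gz (formAct Q Tmat)) -
          (-1) ^ k * ∑ Q ∈ Sminus, gz (formAct Q Tmat) := by
      show (denom Tmat z) ^ (-(2 * (k : ℤ))) * q (mobius Tmat z) = _
      rw [hq (mobius Tmat z), mul_sub, Finset.mul_sum, mul_left_comm, Finset.mul_sum]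
      congr 1
      · exact Finset.sum_congr rfl fun Q _ => slash_formVal k Tmat Q z hden
      · congr 1
        exact Finset.sum_congr rfl fun Q _ => slash_formVal k Tmat Q z hden
    have hterm : ∀ Q : ℝ × ℝ × ℝ, gz (formAct Q Tmat) = (-1) ^ k * gz (φ Q) := by
      intro Q
      have h1 : formAct Q Tmat = -(φ Q) := by rw [hφ, neg_neg]
      rw [h1, hgz]
      show (formVal (-(φ Q)) z) ^ (-(k:ℤ)) = _
      rw [formVal_neg, zpow_neg_form]
    have h1 : ∑ Q ∈ Splus, gz (formAct Q Tmat) = (-1:ℂ) ^ k * ∑ Q ∈ Sminus, gz Q := by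
      rw [Finset.mul_sum]
      exact Finset.sum_nbij' φ φ hφP hφM (fun Q _ => hφφ Q) (fun Q _ => hφφ Q) (fun Q _ => hterm Q)
    have h2 : ∑ Q ∈ Sminus, gz (formAct Q Tmat) = (-1:ℂ) ^ k * ∑ Q ∈ Splus, gz Q := by
      rw [Finset.mul_sum]
      exact Finset.sum_nbij' φ φ hφM hφP (fun Q _ => hφφ Q) (fun Q _ => hφφ Q) (fun Q _ => hterm Q)
    rw [hq z, hslash, h1, h2]
    linear_combination (-(∑ Q ∈ Splus, gz Q)) * hk1
  · -- the `U`-relation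
    intro z hyp
    set gz : (ℝ × ℝ × ℝ) → ℂ := fun R => (formVal R z) ^ (-(k : ℤ)) with hgz
    have hgzneg : ∀ R : ℝ × ℝ × ℝ, gz (-R) = (-1:ℂ) ^ k * gz R := by
      intro R
      rw [hgz]
      show (formVal (-R) z) ^ (-(k:ℤ)) = _
      rw [formVal_neg, zpow_neg_form]
    have hstep : ∀ t ∈ Finset.range p, slash k ((Umat l) ^ t) q z =
        (∑ Q ∈ Splus, gz (formAct Q ((Umat l) ^ t))) -
          (-1) ^ k * ∑ Q ∈ Sminus, gz (formAct Q ((Umat l) ^ t)) := by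
      intro t ht
      have hden := (hyp t (Finset.mem_range.mp ht)).1
      show (denom ((Umat l)^t) z) ^ (-(2 * (k : ℤ))) * q (mobius ((Umat l)^t) z) = _
      rw [hq (mobius ((Umat l)^t) z), mul_sub, Finset.mul_sum, mul_left_comm, Finset.mul_sum]
      congr 1
      · exact Finset.sum_congr rfl fun Q _ => slash_formVal k _ Q z hden
      · congr 1
        exact Finset.sum_congr rfl fun Q _ => slash_formVal k _ Q z hden
    rw [Finset.sum_congr rfl hstep, Finset.sum_sub_distrib, ← Finset.mul_sum]
    have hA : ∑ t ∈ Finset.range p, ∑ Q ∈ Splus, gz (formAct Q ((Umat l) ^ t))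
        = ∑ x ∈ Splus ×ˢ Finset.range p, gz (formAct x.1 ((Umat l) ^ x.2)) := by
      rw [Finset.sum_product]
      exact Finset.sum_comm
    have hB : ∑ t ∈ Finset.range p, ∑ Q ∈ Sminus, gz (formAct Q ((Umat l) ^ t))
        = ∑ x ∈ Sminus ×ˢ Finset.range p, gz (formAct x.1 ((Umat l) ^ x.2)) := by
      rw [Finset.sum_product]
      exact Finset.sum_comm
    rw [hA, hB]
    -- regroup both double sums by the common form
    have key : ∑ x ∈ Splus ×ˢ Finset.range p, gz (formAct x.1 ((Umat l) ^ x.2))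
        = ∑ x ∈ Sminus ×ˢ Finset.range p, gz (formAct (-x.1) ((Umat l) ^ x.2)) := by
      rw [Finset.sum_comp gz (fun x : (ℝ×ℝ×ℝ) × ℕ => formAct x.1 ((Umat l) ^ x.2)),
        Finset.sum_comp gz (fun x : (ℝ×ℝ×ℝ) × ℕ => formAct (-x.1) ((Umat l) ^ x.2))]
      set im1 := (Splus ×ˢ Finset.range p).image
        (fun x : (ℝ×ℝ×ℝ) × ℕ => formAct x.1 ((Umat l) ^ x.2)) with him1
      set im2 := (Sminus ×ˢ Finset.range p).image
        (fun x : (ℝ×ℝ×ℝ) × ℕ => formAct (-x.1) ((Umat l) ^ x.2)) with him2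
      have e1 : ∑ R ∈ im1, ((Splus ×ˢ Finset.range p).filter
          (fun x => formAct x.1 ((Umat l) ^ x.2) = R)).card • gz R
          = ∑ R ∈ im1 ∪ im2, ((Splus ×ˢ Finset.range p).filter
          (fun x => formAct x.1 ((Umat l) ^ x.2) = R)).card • gz R := by
        apply Finset.sum_subset Finset.subset_union_left
        intro R _ hR
        have hemp : ((Splus ×ˢ Finset.range p).filter
            (fun x => formAct x.1 ((Umat l) ^ x.2) = R)) = ∅ := by
          rw [Finset.filter_eq_empty_iff]
          intro x hx heq
          exact hR (him1 ▸ Finset.mem_image.mpr ⟨x, hx, heq⟩)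
        rw [hemp]
        simp
      have e2 : ∑ R ∈ im2, ((Sminus ×ˢ Finset.range p).filter
          (fun x => formAct (-x.1) ((Umat l) ^ x.2) = R)).card • gz R
          = ∑ R ∈ im1 ∪ im2, ((Sminus ×ˢ Finset.range p).filter
          (fun x => formAct (-x.1) ((Umat l) ^ x.2) = R)).card • gz R := by
        apply Finset.sum_subset Finset.subset_union_right
        intro R _ hR
        have hemp : ((Sminus ×ˢ Finset.range p).filter
            (fun x => formAct (-x.1) ((Umat l) ^ x.2) = R)) = ∅ := by
          rw [Finset.filter_eq_empty_iff]
          intro x hx heq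
          exact hR (him2 ▸ Finset.mem_image.mpr ⟨x, hx, heq⟩)
        rw [hemp]
        simp
      rw [e1, e2]
      apply Finset.sum_congr rfl
      intro R hRmem
      have hRorb : R ∈ formOrbit l Q₀ := by
        rcases Finset.mem_union.mp hRmem with hR | hR
        · obtain ⟨x, hx, rfl⟩ := Finset.mem_image.mp hR
          obtain ⟨hQ, -⟩ := Finset.mem_product.mp hx
          exact orbit_act ((hSplus x.1).mp hQ).1 (Upow_mem _)
        · obtain ⟨x, hx, rfl⟩ := Finset.mem_image.mp hR
          obtain ⟨hQ, -⟩ := Finset.mem_product.mp hx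
          have h1 := ((hSminus x.1).mp hQ).1
          exact orbit_act (orbit_neg' h1) (Upow_mem _)
      rw [fiber_count hp hl hQ₀ hSplus hSminus hRorb]
    have hBψ : ∑ x ∈ Sminus ×ˢ Finset.range p, gz (formAct x.1 ((Umat l) ^ x.2))
        = (-1:ℂ)^k * ∑ x ∈ Sminus ×ˢ Finset.range p,
            gz (formAct (-x.1) ((Umat l) ^ x.2)) := by
      rw [Finset.mul_sum]
      apply Finset.sum_congr rfl
      intro x _
      have h1 : formAct x.1 ((Umat l) ^ x.2) = -(formAct (-x.1) ((Umat l) ^ x.2)) := by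
        rw [formAct_neg, neg_neg]
      rw [h1, hgzneg]
    rw [key, hBψ]
    linear_combination (-(∑ x ∈ Sminus ×ˢ Finset.range p,
      gz (formAct (-x.1) ((Umat l) ^ x.2)))) * hk1
end
end

section
/- Fix an integer p ≥ 3, set λ = 2cos(π/p) and U = [[λ,−1],[1,0]] ∈ SL(2,ℝ). Then U^p = −I, and U^t ∉ {I, −I} for every t with 1 ≤ t ≤ p−1. Consequently the image of U in PSL(2,ℝ) has order exactly p. -/
open Matrix

open scoped MatrixGroups

noncomputable section

lemma Umat_coe_s6 (l : ℝ) : (Umat l).1 = !![l, -1; 1, 0] := by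
  show !![1, l; 0, 1] * !![0, -1; 1, 0] = !![l, -1; 1, 0]
  simp [Umat, Smat, Tmat, Matrix.SpecialLinearGroup.coe_mul, Matrix.mul_fin_two]

lemma sin_rec (a θ : ℝ) : Real.sin (a + θ) = Real.sin a * (2 * Real.cos θ) - Real.sin (a - θ) := by
  rw [Real.sin_add, Real.sin_sub]; ring

lemma Umat_pow (p : ℕ) (hp : 3 ≤ p) (t : ℕ) :
    ((Umat (2 * Real.cos (Real.pi / p))) ^ t).1 =
      !![Real.sin (((t:ℝ)+1) * (Real.pi/p)) / Real.sin (Real.pi/p),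
         -(Real.sin ((t:ℝ) * (Real.pi/p)) / Real.sin (Real.pi/p));
         Real.sin ((t:ℝ) * (Real.pi/p)) / Real.sin (Real.pi/p),
         -(Real.sin (((t:ℝ)-1) * (Real.pi/p)) / Real.sin (Real.pi/p))] := by
  have hp0 : (0:ℝ) < p := by positivity
  have hp3 : (3:ℝ) ≤ p := by exact_mod_cast hp
  have hθ0 : 0 < Real.pi / p := by positivity
  have hθπ : Real.pi / p < Real.pi := by
    rw [div_lt_iff₀ hp0]
    nlinarith [Real.pi_pos]
  have hs : Real.sin (Real.pi / p) ≠ 0 :=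
    ne_of_gt (Real.sin_pos_of_pos_of_lt_pi hθ0 hθπ)
  induction t with
  | zero =>
    simp only [pow_zero, Matrix.SpecialLinearGroup.coe_one, Nat.cast_zero]
    ext i j
    fin_cases i <;> fin_cases j <;>
      simp [div_self hs, Real.sin_neg, neg_div, zero_mul]
  | succ t ih =>
    rw [pow_succ, Matrix.SpecialLinearGroup.coe_mul, ih, Umat_coe_s6, Matrix.mul_fin_two]
    have key : ∀ a : ℝ, Real.sin (a * (Real.pi/p)) / Real.sin (Real.pi/p) * (2 * Real.cos (Real.pi/p))
        + -(Real.sin ((a-1) * (Real.pi/p)) / Real.sin (Real.pi/p)) * 1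
        = Real.sin ((a+1) * (Real.pi/p)) / Real.sin (Real.pi/p) := by
      intro a
      rw [show (a+1) * (Real.pi/p) = a * (Real.pi/p) + Real.pi/p by ring,
          show (a-1) * (Real.pi/p) = a * (Real.pi/p) - Real.pi/p by ring,
          sin_rec (a * (Real.pi/p)) (Real.pi/p)]
      field_simp
      ring_nf
    have k1 := key ((t:ℝ)+1)
    have k2 := key (t:ℝ)
    rw [show (t:ℝ)+1-1 = (t:ℝ) by ring] at k1
    push_cast
    ext i j
    fin_cases i <;> fin_cases j <;>
      simp only [Matrix.cons_val', Matrix.cons_val_zero, Matrix.cons_val_one, Matrix.head_cons,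
        Matrix.head_fin_const, Matrix.empty_val', Matrix.cons_val_fin_one, Matrix.of_apply,
        Fin.mk_zero, Fin.mk_one, Fin.isValue]
    · linarith [k1]
    · ring
    · linarith [k2]
    · ring

lemma sin_t_pos (p : ℕ) (hp : 3 ≤ p) (t : ℕ) (ht1 : 1 ≤ t) (ht2 : t ≤ p - 1) :
    0 < Real.sin ((t:ℝ) * (Real.pi / p)) := by
  have hp0 : (0:ℝ) < p := by positivity
  have ht1' : (1:ℝ) ≤ (t:ℝ) := by exact_mod_cast ht1
  have ht2' : (t:ℝ) + 1 ≤ (p:ℝ) := by exact_mod_cast Nat.add_le_of_le_sub (by omega) ht2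
  have hθ0 : 0 < Real.pi / p := by positivity
  apply Real.sin_pos_of_pos_of_lt_pi
  · nlinarith
  · have : (t:ℝ) * (Real.pi / p) ≤ ((p:ℝ) - 1) * (Real.pi / p) := by nlinarith
    have h2 : ((p:ℝ) - 1) * (Real.pi / p) = Real.pi - Real.pi / p := by
      field_simp
    nlinarith

lemma entry10_ne (p : ℕ) (hp : 3 ≤ p) (t : ℕ) (ht1 : 1 ≤ t) (ht2 : t ≤ p - 1) :
    ((Umat (2 * Real.cos (Real.pi / p)) ^ t)).1 1 0 ≠ 0 := by
  have hp0 : (0:ℝ) < p := by positivity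
  have hp3 : (3:ℝ) ≤ p := by exact_mod_cast hp
  have hθπ : Real.pi / p < Real.pi := by
    rw [div_lt_iff₀ hp0]; nlinarith [Real.pi_pos]
  have hs : 0 < Real.sin (Real.pi / p) :=
    Real.sin_pos_of_pos_of_lt_pi (by positivity) hθπ
  rw [Umat_pow p hp t]
  have := sin_t_pos p hp t ht1 ht2
  simp only [Matrix.cons_val', Matrix.cons_val_zero, Matrix.cons_val_one, Matrix.head_cons,
    Matrix.head_fin_const, Matrix.empty_val', Matrix.cons_val_fin_one, Matrix.of_apply]
  positivity

/-- With `λ = 2cos(π/p)`, `U^p = -I`, `U^t ∉ {I, -I}` for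
`1 ≤ t ≤ p-1`, and the image of `U` in `PSL(2,ℝ)` has order exactly `p`. -/
theorem Umat_order (p : ℕ) (hp : 3 ≤ p) (l : ℝ) (hl : l = 2 * Real.cos (Real.pi / p)) :
    ((Umat l) ^ p).1 = -(1 : Matrix (Fin 2) (Fin 2) ℝ) ∧
    (∀ t : ℕ, 1 ≤ t → t ≤ p - 1 →
      ((Umat l) ^ t).1 ≠ (1 : Matrix (Fin 2) (Fin 2) ℝ) ∧
      ((Umat l) ^ t).1 ≠ -(1 : Matrix (Fin 2) (Fin 2) ℝ)) ∧
    orderOf ((QuotientGroup.mk (Umat l)) : Matrix.ProjectiveSpecialLinearGroup (Fin 2) ℝ)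
      = p := by
  subst hl
  have hp0 : (0:ℝ) < p := by positivity
  have hpn : (p:ℝ) ≠ 0 := ne_of_gt hp0
  have hp3 : (3:ℝ) ≤ p := by exact_mod_cast hp
  have hθπ : Real.pi / p < Real.pi := by
    rw [div_lt_iff₀ hp0]; nlinarith [Real.pi_pos]
  have hs : Real.sin (Real.pi / p) ≠ 0 :=
    ne_of_gt (Real.sin_pos_of_pos_of_lt_pi (by positivity) hθπ)
  have hA : ((Umat (2 * Real.cos (Real.pi / p))) ^ p).1 = -(1 : Matrix (Fin 2) (Fin 2) ℝ) := by
    rw [Umat_pow p hp p]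
    have h1 : ((p:ℝ)+1)*(Real.pi/p) = Real.pi/p + Real.pi := by field_simp; ring
    have h2 : ((p:ℝ))*(Real.pi/p) = Real.pi := by field_simp
    have h3 : ((p:ℝ)-1)*(Real.pi/p) = Real.pi - Real.pi/p := by field_simp
    rw [h1, h2, h3, Real.sin_add_pi, Real.sin_pi, Real.sin_pi_sub]
    ext i j
    fin_cases i <;> fin_cases j <;>
      simp [div_self hs, neg_div, Matrix.one_apply]
  refine ⟨hA, fun t ht1 ht2 => ?_, ?_⟩
  · constructor <;> intro h <;> apply entry10_ne p hp t ht1 ht2 <;> rw [h] <;>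
      simp [Matrix.one_apply]
  · have hcen : (Umat (2 * Real.cos (Real.pi / p))) ^ p ∈
        Subgroup.center SL2R := by
      rw [Subgroup.mem_center_iff]
      intro g
      apply Subtype.ext
      rw [Matrix.SpecialLinearGroup.coe_mul, Matrix.SpecialLinearGroup.coe_mul, hA]
      simp
    rw [orderOf_eq_iff (by omega)]
    constructor
    · rw [← QuotientGroup.mk_pow, QuotientGroup.eq_one_iff]
      exact hcen
    · intro m hmp hm0 h
      rw [← QuotientGroup.mk_pow, QuotientGroup.eq_one_iff] at h
      obtain ⟨r, hr2, hr⟩ := Matrix.SpecialLinearGroup.mem_center_iff.mp h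
      have h10 : ((Umat (2 * Real.cos (Real.pi / p)) ^ m)).1 1 0 = 0 := by
        rw [← hr]
        simp [Matrix.scalar_apply]
      exact entry10_ne p hp m hm0 (by omega) h10
end
end
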